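/- Let (F(X),e₁) be the free digroup on a set X and (D,e₂) a digroup every element of which is a bar-unit (halo part E = D). Then the set Ω₁ ∪ Ω₂, where Ω₁ = {[e₁u]₁ : u ∈ F_grp(X)} (F_grp(X) the free group on X realized by reduced words) and Ω₂ = {[pxq]_{|p|+1} : p,q ∈ F_grp(X), x ∈ X ∪ D°}, with operations [w]_n ⊢ [e₁u]₁ = [e₁ (wu)~]₁, [w]_n ⊢ [pxq]_{|p|+1} = [(wp)~ x q]_{|(wp)~|+1}, [e₁u]₁ ⊣ [w]_n = [e₁ (uw)~]₁, [pxq]_{|p|+1} ⊣ [w]_n = [p x (qw)~]_{|p|+1} (where v~ denotes group reduction of the projection to free-group letters), is a free product of (F(X),e₁) and (D,e₂) as digroups. -/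

import Mathlib

/-- A disemigroup: two associative operations `l` (⊢) and `r` (⊣)
satisfying the dialgebra axioms. -/
structure DisemigroupStruct (D : Type) where
  l : D → D → D
  r : D → D → D
  l_assoc : ∀ a b c, l (l a b) c = l a (l b c)
  r_assoc : ∀ a b c, r (r a b) c = r a (r b c)
  ax1 : ∀ a b c, r a (l b c) = r a (r b c)
  ax2 : ∀ a b c, l (r a b) c = l (l a b) c
  ax3 : ∀ a b c, l a (r b c) = r (l a b) c

/-- A digroup: a disemigroup with a bar-unit `one` and inverses. -/
structure DigroupStruct (D : Type) extends DisemigroupStruct D where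
  one : D
  inv : D → D
  one_l : ∀ a, l one a = a
  r_one : ∀ a, r a one = a
  l_inv : ∀ a, l a (inv a) = one
  inv_r : ∀ a, r (inv a) a = one

def IsDisemigroupHom {A B : Type} (G : DisemigroupStruct A) (H : DisemigroupStruct B)
    (f : A → B) : Prop :=
  (∀ a b, f (G.l a b) = H.l (f a) (f b)) ∧ (∀ a b, f (G.r a b) = H.r (f a) (f b))

def IsDigroupHom {A B : Type} (G : DigroupStruct A) (H : DigroupStruct B)
    (f : A → B) : Prop :=
  (∀ a b, f (G.l a b) = H.l (f a) (f b)) ∧ (∀ a b, f (G.r a b) = H.r (f a) (f b)) ∧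
  f G.one = H.one

/-- The group part J = {a ⊢ 1 : a ∈ G}. -/
def groupPart {A : Type} (G : DigroupStruct A) : Set A := {a | ∃ b, a = G.l b G.one}

/-- The halo: the set of bar-units. -/
def halo {A : Type} (G : DigroupStruct A) : Set A := {e | ∀ a, G.l e a = a ∧ G.r a e = a}

/-- `(D, g1, g2)` is a free product (coproduct) of the digroups `D1`, `D2`. -/
def IsFreeProduct {A1 A2 B : Type} (D1 : DigroupStruct A1) (D2 : DigroupStruct A2)
    (D : DigroupStruct B) (g1 : A1 → B) (g2 : A2 → B) : Prop :=
  IsDigroupHom D1 D g1 ∧ IsDigroupHom D2 D g2 ∧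
  ∀ {C : Type} (G : DigroupStruct C) (f1 : A1 → C) (f2 : A2 → C),
    IsDigroupHom D1 G f1 → IsDigroupHom D2 G f2 →
    ∃! φ : B → C, IsDigroupHom D G φ ∧ φ ∘ g1 = f1 ∧ φ ∘ g2 = f2

/-- `F` (with generators `ι : X → A`) is the free digroup on `X`. -/
def IsFreeDigroup {X A : Type} (F : DigroupStruct A) (ι : X → A) : Prop :=
  ∀ {B : Type} (G : DigroupStruct B) (f : X → B),
    ∃! φ : A → B, IsDigroupHom F G φ ∧ φ ∘ ι = f

section Example1

variable (X : Type) {D : Type} (Dst : DigroupStruct D)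

/-- The carrier `Ω₁ ∪ Ω₂` of the free product of the free digroup `F(X)` and an
all-bar-unit digroup `D`: `Ω₁ = {[e₁u]₁ : u ∈ gp⟨X⟩}` and
`Ω₂ = {[pxq]_{|p|+1} : p, q ∈ gp⟨X⟩, x ∈ X ∪ D°}`. -/
def Omega10 : Type :=
  FreeGroup X ⊕ (FreeGroup X × (X ⊕ {d : D // d ≠ Dst.one}) × FreeGroup X)

/-- The group-part image of an element of `Ω`. -/
def hat10 : Omega10 X Dst → FreeGroup X
  | Sum.inl u => u
  | Sum.inr (p, Sum.inl x, q) => p * FreeGroup.of x * q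
  | Sum.inr (p, Sum.inr _, q) => p * q

/-- `[w]_n ⊢ [e₁u]₁ = [e₁(wu)~]₁` and `[w]_n ⊢ [pxq]_{|p|+1} = [(wp)~xq]_{|(wp)~|+1}`. -/
def opL10 (z z' : Omega10 X Dst) : Omega10 X Dst :=
  match z' with
  | Sum.inl u => Sum.inl (hat10 X Dst z * u)
  | Sum.inr (p, x, q) => Sum.inr (hat10 X Dst z * p, x, q)

/-- `[e₁u]₁ ⊣ [w]_n = [e₁(uw)~]₁` and `[pxq]_{|p|+1} ⊣ [w]_n = [px(qw)~]_{|p|+1}`. -/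
def opR10 (z z' : Omega10 X Dst) : Omega10 X Dst :=
  match z with
  | Sum.inl u => Sum.inl (u * hat10 X Dst z')
  | Sum.inr (p, x, q) => Sum.inr (p, x, q * hat10 X Dst z')

end Example1


section Dig
variable {C : Type} (G : DigroupStruct C)

lemma dg_bar_l {e : C} (h : G.l e G.one = G.one) (c : C) : G.l e c = c := by
  conv_lhs => rw [← G.one_l c, ← G.l_assoc, h, G.one_l]

lemma dg_bar_r {e : C} (h : G.r G.one e = G.one) (c : C) : G.r c e = c := by
  conv_lhs => rw [← G.r_one c, G.r_assoc, h, G.r_one]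

lemma dg_l_lone (a c : C) : G.l (G.l a G.one) c = G.l a c := by
  rw [G.l_assoc, G.one_l]

lemma dg_r_lone (w a : C) : G.r w (G.l a G.one) = G.r w a := by
  rw [G.ax1, ← G.r_assoc, G.r_one]

/-- For `j` in the group part, `1 ⊣ j = j`. -/
lemma dg_rone_j {j : C} (hj : G.l j G.one = j) : G.r G.one j = j := by
  conv_lhs => rw [← G.l_inv j, ← G.ax3, G.inv_r]
  rw [hj]

/-- On the group part, the two operations agree. -/
lemma dg_l_eq_r {a j : C} (ha : G.l a G.one = a) (hj : G.l j G.one = j) :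
    G.r a j = G.l a j := by
  conv_lhs => rw [← ha]
  rw [← G.ax3, dg_rone_j G hj]

/-- The group part as a subtype. -/
abbrev JP (G : DigroupStruct C) : Type := {c : C // G.l c G.one = c}

lemma dg_j_rinv (a : C) : G.l a (G.l (G.inv a) G.one) = G.one := by
  rw [← G.l_assoc, G.l_inv, G.one_l]

def jGroup : Group (JP G) where
  mul a b := ⟨G.l a.1 b.1, by rw [G.l_assoc, b.2]⟩
  one := ⟨G.one, G.one_l G.one⟩
  inv a := ⟨G.l (G.inv a.1) G.one, by rw [G.l_assoc, G.one_l]⟩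
  mul_assoc a b c := Subtype.ext (G.l_assoc a.1 b.1 c.1)
  one_mul a := Subtype.ext (G.one_l a.1)
  mul_one a := Subtype.ext a.2
  inv_mul_cancel a := by
    apply Subtype.ext
    have hak : G.l a.1 (G.l (G.inv a.1) G.one) = G.one := dg_j_rinv G a.1
    have hkk : G.l (G.l (G.inv a.1) G.one)
        (G.l (G.inv (G.l (G.inv a.1) G.one)) G.one) = G.one := dg_j_rinv G _
    have ha : a.1 = G.l (G.inv (G.l (G.inv a.1) G.one)) G.one := by
      calc a.1 = G.l a.1 G.one := a.2.symm
        _ = G.l a.1 (G.l (G.l (G.inv a.1) G.one)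
              (G.l (G.inv (G.l (G.inv a.1) G.one)) G.one)) := by rw [hkk]
        _ = G.l (G.l a.1 (G.l (G.inv a.1) G.one))
              (G.l (G.inv (G.l (G.inv a.1) G.one)) G.one) := (G.l_assoc _ _ _).symm
        _ = G.l G.one (G.l (G.inv (G.l (G.inv a.1) G.one)) G.one) := by rw [hak]
        _ = _ := G.one_l _
    show G.l (G.l (G.inv a.1) G.one) a.1 = G.one
    nth_rewrite 2 [ha]
    exact hkk

end Dig

section Example1Aux

variable (X : Type) {D : Type} (Dst : DigroupStruct D)

@[simp] lemma opL_inl (z : Omega10 X Dst) (u : FreeGroup X) :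
    opL10 X Dst z (Sum.inl u) = Sum.inl (hat10 X Dst z * u) := rfl

@[simp] lemma opL_inr (z : Omega10 X Dst) (p q : FreeGroup X) (x) :
    opL10 X Dst z (Sum.inr (p, x, q)) = Sum.inr (hat10 X Dst z * p, x, q) := rfl

@[simp] lemma opR_inl (z : Omega10 X Dst) (u : FreeGroup X) :
    opR10 X Dst (Sum.inl u) z = Sum.inl (u * hat10 X Dst z) := rfl

@[simp] lemma opR_inr (z : Omega10 X Dst) (p q : FreeGroup X) (x) :
    opR10 X Dst (Sum.inr (p, x, q)) z = Sum.inr (p, x, q * hat10 X Dst z) := rfl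

@[simp] lemma hat_inl (u : FreeGroup X) : hat10 X Dst (Sum.inl u) = u := rfl

@[simp] lemma hat_inr_inl (p q : FreeGroup X) (x : X) :
    hat10 X Dst (Sum.inr (p, Sum.inl x, q)) = p * FreeGroup.of x * q := rfl

@[simp] lemma hat_inr_inr (p q : FreeGroup X) (d : {d : D // d ≠ Dst.one}) :
    hat10 X Dst (Sum.inr (p, Sum.inr d, q)) = p * q := rfl

lemma hat_opL (z z' : Omega10 X Dst) :
    hat10 X Dst (opL10 X Dst z z') = hat10 X Dst z * hat10 X Dst z' := by
  rcases z' with u | ⟨p, x | d, q⟩ <;> simp [mul_assoc]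

lemma hat_opR (z z' : Omega10 X Dst) :
    hat10 X Dst (opR10 X Dst z z') = hat10 X Dst z * hat10 X Dst z' := by
  rcases z with u | ⟨p, x | d, q⟩ <;> simp [mul_assoc]

def Qst : DigroupStruct (Omega10 X Dst) where
  l := opL10 X Dst
  r := opR10 X Dst
  one := Sum.inl 1
  inv z := Sum.inl (hat10 X Dst z)⁻¹
  l_assoc a b c := by
    rcases c with u | ⟨p, x, q⟩ <;> simp [hat_opL, mul_assoc] <;> rfl
  r_assoc a b c := by
    rcases a with u | ⟨p, x, q⟩ <;> simp [hat_opR, mul_assoc] <;> rfl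
  ax1 a b c := by
    rcases a with u | ⟨p, x, q⟩ <;> simp [hat_opL, hat_opR] <;> rfl
  ax2 a b c := by
    rcases c with u | ⟨p, x, q⟩ <;> simp [hat_opL, hat_opR] <;> rfl
  ax3 a b c := by
    rcases b with u | ⟨p, x, q⟩ <;> rcases c with w | ⟨p', x', q'⟩ <;>
      simp [opL10, opR10, hat10, mul_assoc] <;> rfl
  one_l a := by
    rcases a with u | ⟨p, x, q⟩ <;> simp [opL10] <;> rfl
  r_one a := by
    rcases a with u | ⟨p, x, q⟩ <;> simp [opR10] <;> rfl
  l_inv a := by simp <;> rfl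
  inv_r a := by simp <;> rfl

lemma Qst_l : (Qst X Dst).l = opL10 X Dst := rfl
lemma Qst_r : (Qst X Dst).r = opR10 X Dst := rfl
lemma Qst_one : (Qst X Dst).one = Sum.inl 1 := rfl

lemma opL_hat_one (z z' : Omega10 X Dst) (h : hat10 X Dst z = 1) :
    opL10 X Dst z z' = z' := by
  rcases z' with u | ⟨p, x, q⟩ <;> simp [h] <;> rfl

lemma opR_hat_one (z z' : Omega10 X Dst) (h : hat10 X Dst z' = 1) :
    opR10 X Dst z z' = z := by
  rcases z with u | ⟨p, x, q⟩ <;> simp [h] <;> rfl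


end Example1Aux

section Phi

variable {X D C : Type} {Dst : DigroupStruct D} (G : DigroupStruct C)
  (v : X ⊕ {d : D // d ≠ Dst.one} → C)

def tauGen (x : X) : JP G := ⟨G.l (v (Sum.inl x)) G.one, by rw [G.l_assoc, G.one_l]⟩

/-- The canonical group homomorphism from the free group into the group part. -/
def tauF : FreeGroup X → C :=
  letI := jGroup G
  fun u => (FreeGroup.lift (tauGen G v) u).1

lemma tauF_one : tauF G v (1 : FreeGroup X) = G.one := by
  letI := jGroup G
  show (FreeGroup.lift (tauGen G v) (1 : FreeGroup X)).1 = G.one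
  rw [map_one]; rfl

lemma tauF_mul (u w : FreeGroup X) :
    tauF G v (u * w) = G.l (tauF G v u) (tauF G v w) := by
  letI := jGroup G
  show (FreeGroup.lift (tauGen G v) (u * w)).1 = _
  rw [map_mul]; rfl

lemma tauF_of (x : X) : tauF G v (FreeGroup.of x) = G.l (v (Sum.inl x)) G.one := by
  letI := jGroup G
  show (FreeGroup.lift (tauGen G v) (FreeGroup.of x)).1 = _
  rw [FreeGroup.lift_apply_of]; rfl

lemma tauF_mem (u : FreeGroup X) : G.l (tauF G v u) G.one = tauF G v u := by
  letI := jGroup G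
  exact (FreeGroup.lift (tauGen G v) u).2

/-- The universal map `Ω → C`. -/
def phiF : Omega10 X Dst → C
  | Sum.inl u => tauF G v u
  | Sum.inr (p, x, q) => G.r (G.l (tauF G v p) (v x)) (tauF G v q)

lemma phi_l_absorb
    (hv : ∀ w : {d : D // d ≠ Dst.one},
      G.l (v (Sum.inr w)) G.one = G.one ∧ G.r G.one (v (Sum.inr w)) = G.one)
    (z : Omega10 X Dst) (c : C) :
    G.l (phiF G v z) c = G.l (tauF G v (hat10 X Dst z)) c := by
  rcases z with u | ⟨p, x | d, q⟩
  · rfl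
  · show G.l (G.r (G.l (tauF G v p) (v (Sum.inl x))) (tauF G v q)) c = _
    simp only [hat_inr_inl, tauF_mul, tauF_of, G.ax2, G.l_assoc, G.one_l]
  · show G.l (G.r (G.l (tauF G v p) (v (Sum.inr d))) (tauF G v q)) c = _
    simp only [hat_inr_inr, tauF_mul, G.ax2, G.l_assoc, G.one_l,
      dg_bar_l G (hv d).1]

lemma phi_r_absorb
    (hv : ∀ w : {d : D // d ≠ Dst.one},
      G.l (v (Sum.inr w)) G.one = G.one ∧ G.r G.one (v (Sum.inr w)) = G.one)
    (z : Omega10 X Dst) (c : C) :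
    G.r c (phiF G v z) = G.r c (tauF G v (hat10 X Dst z)) := by
  rcases z with u | ⟨p, x | d, q⟩
  · rfl
  · show G.r c (G.r (G.l (tauF G v p) (v (Sum.inl x))) (tauF G v q)) = _
    simp only [hat_inr_inl, tauF_mul, tauF_of, G.ax1, ← G.r_assoc, G.r_one]
  · show G.r c (G.r (G.l (tauF G v p) (v (Sum.inr d))) (tauF G v q)) = _
    simp only [hat_inr_inr, tauF_mul, G.ax1, ← G.r_assoc, G.r_one,
      dg_bar_r G (hv d).2]

lemma phi_hom
    (hv : ∀ w : {d : D // d ≠ Dst.one},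
      G.l (v (Sum.inr w)) G.one = G.one ∧ G.r G.one (v (Sum.inr w)) = G.one) :
    IsDigroupHom (Qst X Dst) G (phiF G v) := by
  refine ⟨?_, ?_, tauF_one G v⟩
  · intro z z'
    rcases z' with u | ⟨p, x, q⟩
    · show tauF G v (hat10 X Dst z * u) = G.l (phiF G v z) (tauF G v u)
      rw [tauF_mul, ← phi_l_absorb G v hv]
    · show G.r (G.l (tauF G v (hat10 X Dst z * p)) (v x)) (tauF G v q)
        = G.l (phiF G v z) (G.r (G.l (tauF G v p) (v x)) (tauF G v q))
      rw [G.ax3, phi_l_absorb G v hv, tauF_mul, G.l_assoc]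
  · intro z z'
    rcases z with u | ⟨p, x, q⟩
    · show tauF G v (u * hat10 X Dst z') = G.r (tauF G v u) (phiF G v z')
      rw [tauF_mul, phi_r_absorb G v hv,
        dg_l_eq_r G (tauF_mem G v u) (tauF_mem G v _)]
    · show G.r (G.l (tauF G v p) (v x)) (tauF G v (q * hat10 X Dst z'))
        = G.r (G.r (G.l (tauF G v p) (v x)) (tauF G v q)) (phiF G v z')
      rw [G.r_assoc, phi_r_absorb G v hv, tauF_mul, G.ax1]

end Phi

lemma dg_inv_unique {C : Type} (G : DigroupStruct C) {m b b' : C}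
    (hb : G.l m b = G.one) (hb' : G.l b' m = G.one) (hbJ : G.l b' G.one = b') :
    b' = b := by
  calc b' = G.l b' G.one := hbJ.symm
    _ = G.l b' (G.l m b) := by rw [hb]
    _ = G.l (G.l b' m) b := (G.l_assoc _ _ _).symm
    _ = b := by rw [hb', G.one_l]

lemma hom_comp {A B C : Type} {G : DigroupStruct A} {H : DigroupStruct B}
    {K : DigroupStruct C} {f : A → B} {g : B → C}
    (hf : IsDigroupHom G H f) (hg : IsDigroupHom H K g) :
    IsDigroupHom G K (g ∘ f) := by
  refine ⟨fun a b => ?_, fun a b => ?_, ?_⟩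
  · show g (f (G.l a b)) = K.l (g (f a)) (g (f b))
    rw [hf.1, hg.1]
  · show g (f (G.r a b)) = K.r (g (f a)) (g (f b))
    rw [hf.2.1, hg.2.1]
  · show g (f G.one) = K.one
    rw [hf.2.2, hg.2.2]


/-- The explicit construction of the free product of a free digroup `F(X)` and a
digroup `D` all of whose elements are bar-units. -/
theorem freeProduct_freeDigroup_halo {X A D : Type}
    (Fst : DigroupStruct A) (ι : X → A) (hF : IsFreeDigroup Fst ι)
    (Dst : DigroupStruct D) (hD : ∀ e a, Dst.l e a = a ∧ Dst.r a e = a) :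
    ∃ (Q : DigroupStruct (Omega10 X Dst)) (g1 : A → Omega10 X Dst)
      (g2 : D → Omega10 X Dst),
      Q.l = opL10 X Dst ∧ Q.r = opR10 X Dst ∧ Q.one = Sum.inl 1 ∧
      (∀ x : X, g1 (ι x) = Sum.inr (1, Sum.inl x, 1)) ∧
      (∀ d (h : d ≠ Dst.one), g2 d = Sum.inr (1, Sum.inr ⟨d, h⟩, 1)) ∧
      g2 Dst.one = Sum.inl 1 ∧
      IsFreeProduct Fst Dst Q g1 g2 := by


  classical
  obtain ⟨g1, ⟨hg1hom, hg1ι⟩, hg1u⟩ :=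
    hF (Qst X Dst) (fun x => Sum.inr (1, Sum.inl x, 1))
  clear hg1u
  set g2 : D → Omega10 X Dst := fun d =>
    if h : d = Dst.one then Sum.inl 1 else Sum.inr (1, Sum.inr ⟨d, h⟩, 1)
    with hg2def
  have hg2_ne : ∀ d (h : d ≠ Dst.one), g2 d = Sum.inr (1, Sum.inr ⟨d, h⟩, 1) := by
    intro d h
    simp [hg2def, h] <;> rfl
  have hg2_one : g2 Dst.one = Sum.inl 1 := by
    simp [hg2def] <;> rfl
  have hat_g2 : ∀ d, hat10 X Dst (g2 d) = 1 := by
    intro d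
    by_cases h : d = Dst.one
    · rw [h, hg2_one]; rfl
    · rw [hg2_ne d h]; simp
  have hg2hom : IsDigroupHom Dst (Qst X Dst) g2 := by
    refine ⟨fun a b => ?_, fun a b => ?_, hg2_one⟩
    · rw [(hD a b).1]
      exact (opL_hat_one X Dst _ _ (hat_g2 a)).symm
    · rw [(hD b a).2]
      exact (opR_hat_one X Dst _ _ (hat_g2 b)).symm
  refine ⟨Qst X Dst, g1, g2, rfl, rfl, rfl, fun x => congrFun hg1ι x,
    hg2_ne, hg2_one, hg1hom, hg2hom, ?_⟩
  intro C G f1 f2 hf1 hf2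
  set v : X ⊕ {d : D // d ≠ Dst.one} → C :=
    Sum.elim (fun x => f1 (ι x)) (fun w => f2 w.1) with hvdef
  have hv : ∀ w : {d : D // d ≠ Dst.one},
      G.l (v (Sum.inr w)) G.one = G.one ∧ G.r G.one (v (Sum.inr w)) = G.one := by
    intro w
    constructor
    · have h1 := hf2.1 w.1 Dst.one
      rw [(hD w.1 Dst.one).1, hf2.2.2] at h1
      exact h1.symm
    · have h1 := hf2.2.1 Dst.one w.1
      rw [(hD w.1 Dst.one).2, hf2.2.2] at h1
      exact h1.symm
  have hvx : ∀ x : X, v (Sum.inl x) = f1 (ι x) := fun _ => rfl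
  refine ⟨phiF G v, ⟨phi_hom G v hv, ?_, ?_⟩, ?_⟩
  · -- φ ∘ g1 = f1
    have hcomp : IsDigroupHom Fst G (phiF G v ∘ g1) := hom_comp hg1hom (phi_hom G v hv)
    have hgen : (phiF G v ∘ g1) ∘ ι = f1 ∘ ι := by
      funext x
      have hg1x : g1 (ι x) = Sum.inr (1, Sum.inl x, 1) := congrFun hg1ι x
      show phiF G v (g1 (ι x)) = f1 (ι x)
      rw [hg1x]
      show G.r (G.l (tauF G v 1) (v (Sum.inl x))) (tauF G v 1) = f1 (ι x)
      rw [tauF_one, G.one_l, G.r_one]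
      exact hvx x
    obtain ⟨ψ0, _, hu⟩ := hF G (f1 ∘ ι)
    exact (hu _ ⟨hcomp, hgen⟩).trans (hu f1 ⟨hf1, rfl⟩).symm
  · -- φ ∘ g2 = f2
    funext d
    by_cases h : d = Dst.one
    · subst h
      show phiF G v (g2 Dst.one) = f2 Dst.one
      rw [hg2_one, hf2.2.2]
      exact tauF_one G v
    · show phiF G v (g2 d) = f2 d
      rw [hg2_ne d h]
      show G.r (G.l (tauF G v 1) (v (Sum.inr ⟨d, h⟩))) (tauF G v 1) = f2 d
      rw [tauF_one, G.one_l, G.r_one]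
      rfl
  · -- uniqueness
    rintro ψ ⟨hψhom, hψ1, hψ2⟩
    obtain ⟨hQl, hQr, hQone⟩ := hψhom
    have hQone' : ψ (Sum.inl (1 : FreeGroup X)) = G.one := hQone
    have hJψ : ∀ w : FreeGroup X, G.l (ψ (Sum.inl w)) G.one = ψ (Sum.inl w) := by
      intro w
      have e : (Qst X Dst).l (Sum.inl w) (Sum.inl (1 : FreeGroup X)) = Sum.inl w := by
        show Sum.inl (w * 1) = Sum.inl w
        rw [mul_one]
      calc G.l (ψ (Sum.inl w)) G.one
          = G.l (ψ (Sum.inl w)) (ψ (Sum.inl (1 : FreeGroup X))) := by rw [hQone']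
        _ = ψ ((Qst X Dst).l (Sum.inl w) (Sum.inl 1)) := (hQl _ _).symm
        _ = ψ (Sum.inl w) := by rw [e]
    have hinl_of : ∀ x : X, ψ (Sum.inl (FreeGroup.of x)) = tauF G v (FreeGroup.of x) := by
      intro x
      have e1 : (Qst X Dst).l (Sum.inr (1, Sum.inl x, 1)) (Sum.inl (1 : FreeGroup X))
          = Sum.inl (FreeGroup.of x) := by
        show Sum.inl (1 * FreeGroup.of x * 1 * 1) = _
        rw [mul_one, mul_one, one_mul]
      calc ψ (Sum.inl (FreeGroup.of x))
          = ψ ((Qst X Dst).l (Sum.inr (1, Sum.inl x, 1)) (Sum.inl 1)) := by rw [e1]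
        _ = G.l (ψ (Sum.inr (1, Sum.inl x, 1))) (ψ (Sum.inl 1)) := hQl _ _
        _ = G.l (ψ (g1 (ι x))) G.one := by
            have hg1x : g1 (ι x) = Sum.inr (1, Sum.inl x, 1) := congrFun hg1ι x
            rw [hg1x, hQone']
        _ = G.l (f1 (ι x)) G.one := by
            have hx : ψ (g1 (ι x)) = f1 (ι x) := congrFun hψ1 (ι x)
            rw [hx]
        _ = tauF G v (FreeGroup.of x) := (tauF_of G v x).symm
    have hinl : ∀ u : FreeGroup X, ψ (Sum.inl u) = tauF G v u := by
      intro u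
      induction u using FreeGroup.induction_on with
      | C1 => rw [tauF_one]; exact hQone'
      | of x => exact hinl_of x
      | inv_of x ih =>
        have hpure : (pure x : FreeGroup X) = FreeGroup.of x := rfl
        refine dg_inv_unique G (m := tauF G v (FreeGroup.of x)) ?_ ?_ (hJψ _)
        · rw [← tauF_mul, mul_inv_cancel, tauF_one]
        · have e : (Qst X Dst).l (Sum.inl (FreeGroup.of x)⁻¹) (Sum.inl (FreeGroup.of x))
              = Sum.inl ((FreeGroup.of x)⁻¹ * FreeGroup.of x) := rfl
          rw [← ih]; erw [← hQl]; rw [e, inv_mul_cancel]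
          exact hQone'
      | mul u w ihu ihw =>
        have e : (Qst X Dst).l (Sum.inl u) (Sum.inl w) = Sum.inl (u * w) := rfl
        calc ψ (Sum.inl (u * w)) = ψ ((Qst X Dst).l (Sum.inl u) (Sum.inl w)) := by rw [e]
          _ = G.l (ψ (Sum.inl u)) (ψ (Sum.inl w)) := hQl _ _
          _ = G.l (tauF G v u) (tauF G v w) := by rw [ihu, ihw]
          _ = tauF G v (u * w) := (tauF_mul G v u w).symm
    funext z
    rcases z with u | ⟨p, x | w, q⟩
    · exact hinl u
    · have e1 : (Qst X Dst).l (Sum.inl p) (Sum.inr (1, Sum.inl x, 1))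
          = Sum.inr (p, Sum.inl x, (1 : FreeGroup X)) := by
        show Sum.inr (p * 1, Sum.inl x, (1 : FreeGroup X)) = _
        rw [mul_one]
      have e2 : (Qst X Dst).r (Sum.inr (p, Sum.inl x, (1 : FreeGroup X))) (Sum.inl q)
          = Sum.inr (p, Sum.inl x, q) := by
        show Sum.inr (p, Sum.inl x, 1 * q) = _
        rw [one_mul]
      calc ψ (Sum.inr (p, Sum.inl x, q))
          = ψ ((Qst X Dst).r ((Qst X Dst).l (Sum.inl p) (Sum.inr (1, Sum.inl x, 1))) (Sum.inl q)) := by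
            rw [e1, e2]
        _ = G.r (G.l (ψ (Sum.inl p)) (ψ (Sum.inr (1, Sum.inl x, 1)))) (ψ (Sum.inl q)) := by
            erw [hQr, hQl]
        _ = G.r (G.l (tauF G v p) (f1 (ι x))) (tauF G v q) := by
            have hg1x : g1 (ι x) = Sum.inr (1, Sum.inl x, 1) := congrFun hg1ι x
            have hx : ψ (g1 (ι x)) = f1 (ι x) := congrFun hψ1 (ι x)
            rw [hinl, hinl, ← hg1x, hx]
        _ = phiF G v (Sum.inr (p, Sum.inl x, q)) := rfl
    · obtain ⟨d, hd⟩ := w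
      have e1 : (Qst X Dst).l (Sum.inl p) (Sum.inr (1, Sum.inr ⟨d, hd⟩, 1))
          = Sum.inr (p, Sum.inr ⟨d, hd⟩, (1 : FreeGroup X)) := by
        show Sum.inr (p * 1, Sum.inr (⟨d, hd⟩ : {d : D // d ≠ Dst.one}), (1 : FreeGroup X))
          = Sum.inr (p, Sum.inr ⟨d, hd⟩, (1 : FreeGroup X))
        rw [mul_one]
      have e2 : (Qst X Dst).r (Sum.inr (p, Sum.inr ⟨d, hd⟩, (1 : FreeGroup X))) (Sum.inl q)
          = Sum.inr (p, Sum.inr ⟨d, hd⟩, q) := by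
        show Sum.inr (p, Sum.inr (⟨d, hd⟩ : {d : D // d ≠ Dst.one}), 1 * q)
          = Sum.inr (p, Sum.inr ⟨d, hd⟩, q)
        rw [one_mul]
      calc ψ (Sum.inr (p, Sum.inr ⟨d, hd⟩, q))
          = ψ ((Qst X Dst).r ((Qst X Dst).l (Sum.inl p) (Sum.inr (1, Sum.inr ⟨d, hd⟩, 1))) (Sum.inl q)) := by
            rw [e1, e2]
        _ = G.r (G.l (ψ (Sum.inl p)) (ψ (Sum.inr (1, Sum.inr ⟨d, hd⟩, 1)))) (ψ (Sum.inl q)) := by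
            erw [hQr, hQl]
        _ = G.r (G.l (tauF G v p) (f2 d)) (tauF G v q) := by
            rw [hinl, hinl, ← hg2_ne d hd, show ψ (g2 d) = f2 d from congrFun hψ2 d]
        _ = phiF G v (Sum.inr (p, Sum.inr ⟨d, hd⟩, q)) := rfl
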